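/- arXiv:2501.15131 — 6 statements merged into one kernel-verified Lean document; each statement's English description precedes it below -/
import Mathlib

section
/- Let λ₁ > 0 be the largest eigenvalue of A. Then f(x) ≥ −λ₁/4 for all x ∈ ℝⁿ, and f(x) = −λ₁/4 if and only if A x = λ₁ x and ‖x‖ = (λ₁)^{1/2}/2. In particular the global minimum value of f is −λ₁/4 and the global minimizers are exactly the appropriately scaled dominant eigenvectors of A. -/
open Matrix

/-- View a plain vector `Fin n → ℝ` as an element of Euclidean space. -/
def toEuc {n : ℕ} (v : Fin n → ℝ) : EuclideanSpace ℝ (Fin n) := WithLp.toLp 2 v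

lemma inner_eq_dot {n : ℕ} (u v : EuclideanSpace ℝ (Fin n)) :
    (inner ℝ u v : ℝ) = u ⬝ᵥ v := by
  simp [PiLp.inner_apply, dotProduct, RCLike.inner_apply, mul_comm]

lemma rayleigh_aux {n : ℕ} (A : Matrix (Fin n) (Fin n) ℝ) (hA : A.PosSemidef) (lam1 : ℝ)
    (hmax : ∀ i, hA.1.eigenvalues i ≤ lam1) (x : EuclideanSpace ℝ (Fin n)) :
    x ⬝ᵥ A.mulVec x ≤ lam1 * ‖x‖ ^ 2 ∧
    (x ⬝ᵥ A.mulVec x = lam1 * ‖x‖ ^ 2 →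
      toEuc (A.mulVec x) = lam1 • x) := by
  classical
  set b := hA.1.eigenvectorBasis with hb
  set μ := hA.1.eigenvalues with hμ
  set g : Fin n → ℝ := fun i => b.repr x i with hg
  have hmu : ∀ i, 0 ≤ μ i := hA.eigenvalues_nonneg
  -- coordinates of A x in the eigenbasis
  have hcoord : ∀ i, b.repr (toEuc (A.mulVec x)) i = μ i * g i := by
    intro i
    rw [b.repr_apply_apply, inner_eq_dot]
    have hAT : Aᵀ = A := by
      have h := hA.1; rwa [Matrix.IsHermitian, conjTranspose_eq_transpose_of_trivial] at h
    have h1 : (b i : EuclideanSpace ℝ (Fin n)) ⬝ᵥ toEuc (A.mulVec x)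
        = (A.mulVec (b i)) ⬝ᵥ x := by
      show (⇑(b i)) ⬝ᵥ (A.mulVec x) = _
      rw [dotProduct_mulVec, ← Matrix.mulVec_transpose, hAT]
    have h2 : A.mulVec (b i) = μ i • (b i : EuclideanSpace ℝ (Fin n)) :=
      hA.1.mulVec_eigenvectorBasis i
    rw [h1, h2]
    show (μ i • (⇑(b i) : Fin n → ℝ)) ⬝ᵥ x = μ i * g i
    rw [smul_dotProduct, smul_eq_mul]
    have e : (⇑(b i) : Fin n → ℝ) ⬝ᵥ x = g i := by
      show _ = b.repr x i
      rw [b.repr_apply_apply, inner_eq_dot]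
    rw [e]
  have hQ : x ⬝ᵥ A.mulVec x = ∑ i, μ i * g i ^ 2 := by
    have := b.sum_inner_mul_inner x (toEuc (A.mulVec x))
    have h2 : (inner ℝ x (toEuc (A.mulVec x)) : ℝ) = x ⬝ᵥ A.mulVec x := by
      rw [inner_eq_dot]
      rfl
    rw [← h2, ← this]
    refine Finset.sum_congr rfl fun i _ => ?_
    have e1 : (inner ℝ x (b i) : ℝ) = g i := by
      rw [real_inner_comm, ← b.repr_apply_apply]
    have e2 : (inner ℝ (b i) (toEuc (A.mulVec x)) : ℝ) = μ i * g i := by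
      rw [← b.repr_apply_apply, hcoord]
    rw [e1, e2]; ring
  have hN : ‖x‖ ^ 2 = ∑ i, g i ^ 2 := by
    rw [← real_inner_self_eq_norm_sq, ← b.sum_inner_mul_inner x x]
    refine Finset.sum_congr rfl fun i _ => ?_
    have e1 : (inner ℝ x (b i) : ℝ) = g i := by
      rw [real_inner_comm, ← b.repr_apply_apply]
    have e2 : (inner ℝ (b i) x : ℝ) = g i := by rw [← b.repr_apply_apply]
    rw [e1, e2]; ring
  have hdiff : lam1 * ‖x‖ ^ 2 - x ⬝ᵥ A.mulVec x
      = ∑ i, (lam1 - μ i) * g i ^ 2 := by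
    rw [hQ, hN, Finset.mul_sum, ← Finset.sum_sub_distrib]
    refine Finset.sum_congr rfl fun i _ => by ring
  have hterm : ∀ i ∈ Finset.univ, 0 ≤ (lam1 - μ i) * g i ^ 2 := fun i _ =>
    mul_nonneg (sub_nonneg.2 (hmax i)) (sq_nonneg _)
  constructor
  · nlinarith [Finset.sum_nonneg hterm, hdiff]
  · intro heq
    have hz : ∀ i ∈ Finset.univ, (lam1 - μ i) * g i ^ 2 = 0 := by
      rw [← Finset.sum_eq_zero_iff_of_nonneg hterm, ← hdiff, heq]
      ring
    have hcoords : ∀ i, b.repr (toEuc (A.mulVec x)) i = b.repr (lam1 • x) i := by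
      intro i
      rw [hcoord]
      have hsm : b.repr (lam1 • x) i = lam1 * g i := by
        rw [_root_.map_smul]; rfl
      rw [hsm]
      have := hz i (Finset.mem_univ i)
      rcases mul_eq_zero.1 this with h | h
      · have : μ i = lam1 := by linarith [sub_eq_zero.1 h]
        rw [this]
      · rw [sq_eq_zero_iff.1 h]; ring
    apply b.repr.injective
    ext i
    exact hcoords i

/-- Let `λ₁ > 0` be the largest eigenvalue of the symmetric PSD matrix `A`. Then
`f(x) = ‖x‖² − (xᵀAx)^{1/2} ≥ −λ₁/4` for all `x`, with equality iff `A x = λ₁ x` and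
`‖x‖ = √λ₁ / 2`; i.e. the global minimum value is `−λ₁/4`, attained exactly at the
suitably scaled dominant eigenvectors. -/
theorem stmt_3 {n : ℕ} (hn : 0 < n) (A : Matrix (Fin n) (Fin n) ℝ)
    (hA : A.PosSemidef)
    (f : EuclideanSpace ℝ (Fin n) → ℝ)
    (hf : ∀ x : EuclideanSpace ℝ (Fin n),
      f x = ‖x‖ ^ 2 - Real.sqrt (x ⬝ᵥ A.mulVec x))
    (lam1 : ℝ) (hlam1_pos : 0 < lam1)
    (hlam1_eig : ∃ v : EuclideanSpace ℝ (Fin n), v ≠ 0 ∧ toEuc (A.mulVec v) = lam1 • v)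
    (hlam1_max : ∀ (μ : ℝ) (v : EuclideanSpace ℝ (Fin n)),
      v ≠ 0 → toEuc (A.mulVec v) = μ • v → μ ≤ lam1) :
    (∀ x : EuclideanSpace ℝ (Fin n), -(lam1 / 4) ≤ f x) ∧
    (∀ x : EuclideanSpace ℝ (Fin n),
      f x = -(lam1 / 4) ↔ (toEuc (A.mulVec x) = lam1 • x ∧ ‖x‖ = Real.sqrt lam1 / 2)) := by
  classical
  have hmax : ∀ i, hA.1.eigenvalues i ≤ lam1 := by
    intro i
    refine hlam1_max (hA.1.eigenvalues i) (hA.1.eigenvectorBasis i)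
      (hA.1.eigenvectorBasis.orthonormal.ne_zero i) ?_
    exact congrArg (WithLp.toLp 2) (hA.1.mulVec_eigenvectorBasis i)
  have key := fun x => rayleigh_aux A hA lam1 hmax x
  set s := Real.sqrt lam1 with hs
  have hs_pos : 0 < s := Real.sqrt_pos.2 hlam1_pos
  have hs_sq : s ^ 2 = lam1 := Real.sq_sqrt hlam1_pos.le
  have hQ0 : ∀ x : EuclideanSpace ℝ (Fin n), 0 ≤ x ⬝ᵥ A.mulVec x := by
    intro x
    simpa using hA.dotProduct_mulVec_nonneg x
  have hsqrtQ : ∀ x : EuclideanSpace ℝ (Fin n),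
      Real.sqrt (x ⬝ᵥ A.mulVec x) ≤ s * ‖x‖ := by
    intro x
    have h1 : x ⬝ᵥ A.mulVec x ≤ (s * ‖x‖) ^ 2 := by
      have := (key x).1
      nlinarith [hs_sq]
    calc Real.sqrt (x ⬝ᵥ A.mulVec x) ≤ Real.sqrt ((s * ‖x‖) ^ 2) :=
          Real.sqrt_le_sqrt h1
      _ = s * ‖x‖ := Real.sqrt_sq (by positivity)
  have hineq : ∀ x : EuclideanSpace ℝ (Fin n), -(lam1 / 4) ≤ f x := by
    intro x
    rw [hf x]
    have h1 := hsqrtQ x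
    nlinarith [sq_nonneg (‖x‖ - s / 2), hs_sq]
  refine ⟨hineq, fun x => ⟨?_, ?_⟩⟩
  · intro heq
    rw [hf x] at heq
    have h1 := hsqrtQ x
    have ht : ‖x‖ = s / 2 := by
      nlinarith [sq_nonneg (‖x‖ - s / 2), hs_sq]
    have hsq : Real.sqrt (x ⬝ᵥ A.mulVec x) = lam1 / 2 := by
      rw [ht] at heq
      nlinarith [hs_sq]
    have hQval : x ⬝ᵥ A.mulVec x = lam1 * ‖x‖ ^ 2 := by
      have := Real.sq_sqrt (hQ0 x)
      rw [hsq] at this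
      rw [← this, ht]
      nlinarith [hs_sq]
    exact ⟨(key x).2 hQval, by rw [ht]⟩
  · rintro ⟨hAx, hnorm⟩
    rw [hf x]
    have hQval : x ⬝ᵥ A.mulVec x = lam1 ^ 2 / 4 := by
      have h1 : x ⬝ᵥ A.mulVec x = lam1 * (x ⬝ᵥ x) := by
        have : A.mulVec x = lam1 • (x : Fin n → ℝ) := congrArg WithLp.ofLp hAx
        rw [this, dotProduct_smul, smul_eq_mul]
      have h2 : x ⬝ᵥ x = ‖x‖ ^ 2 := by
        rw [← inner_eq_dot x x, real_inner_self_eq_norm_sq]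
      rw [h1, h2, hnorm]
      nlinarith [hs_sq]
    rw [hQval, hnorm]
    have : Real.sqrt (lam1 ^ 2 / 4) = lam1 / 2 := by
      rw [show lam1 ^ 2 / 4 = (lam1 / 2) ^ 2 by ring, Real.sqrt_sq (by linarith)]
    rw [this]
    nlinarith [hs_sq]
end

section
/- Every second-order stationary point of f is a global minimizer: if x ∈ ℝⁿ satisfies A x ≠ 0, ∇f(x) = 2x − Ax/(xᵀAx)^{1/2} = 0, and the Hessian ∇²f(x) = 2I − A/(xᵀAx)^{1/2} + (Ax)(Ax)ᵀ/(xᵀAx)^{3/2} is positive semidefinite, then f(x) = −λ₁/4, where λ₁ is the largest eigenvalue of A. Equivalently, every stationary point of f that is an eigenvector of A for an eigenvalue strictly smaller than λ₁ is a strict saddle point, i.e. its Hessian has a negative eigenvalue. -/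
open Matrix

/-- Every second-order stationary point of `f(x) = ‖x‖² − (xᵀAx)^{1/2}` is a global
minimizer: if `A x ≠ 0`, `∇f(x) = 2x − Ax/(xᵀAx)^{1/2} = 0`, and the Hessian
`∇²f(x) = 2I − A/(xᵀAx)^{1/2} + (Ax)(Ax)ᵀ/(xᵀAx)^{3/2}` is positive semidefinite, then
`f(x) = −λ₁/4` where `λ₁` is the largest eigenvalue of `A`. Equivalently, every stationary
point that is an eigenvector of `A` for an eigenvalue strictly smaller than `λ₁` is a
strict saddle point: its Hessian has a negative eigenvalue. -/
theorem stmt_4 {n : ℕ} (hn : 0 < n) (A : Matrix (Fin n) (Fin n) ℝ)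
    (hA : A.PosSemidef)
    (f : EuclideanSpace ℝ (Fin n) → ℝ)
    (hf : ∀ x : EuclideanSpace ℝ (Fin n),
      f x = ‖x‖ ^ 2 - Real.sqrt (x ⬝ᵥ A.mulVec x))
    (lam1 : ℝ)
    (hlam1_eig : ∃ v : EuclideanSpace ℝ (Fin n), v ≠ 0 ∧ toEuc (A.mulVec v) = lam1 • v)
    (hlam1_max : ∀ (μ : ℝ) (v : EuclideanSpace ℝ (Fin n)),
      v ≠ 0 → toEuc (A.mulVec v) = μ • v → μ ≤ lam1)
    (x : EuclideanSpace ℝ (Fin n))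
    (hx : A.mulVec x ≠ 0)
    (hstat : (2 : ℝ) • x - (Real.sqrt (x ⬝ᵥ A.mulVec x))⁻¹ • toEuc (A.mulVec x) = 0)
    (H : Matrix (Fin n) (Fin n) ℝ)
    (hH : H = (2 : ℝ) • (1 : Matrix (Fin n) (Fin n) ℝ)
        - (Real.sqrt (x ⬝ᵥ A.mulVec x))⁻¹ • A
        + (Real.sqrt (x ⬝ᵥ A.mulVec x) ^ 3)⁻¹ • vecMulVec (A.mulVec x) (A.mulVec x)) :
    (H.PosSemidef → f x = -(lam1 / 4)) ∧
    (∀ μ : ℝ, toEuc (A.mulVec x) = μ • x → μ < lam1 →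
      ∃ (c : ℝ) (w : Fin n → ℝ), c < 0 ∧ w ≠ 0 ∧ H.mulVec w = c • w) := by
  classical
  set q := x ⬝ᵥ A.mulVec x with hqdef
  have hq0 : 0 ≤ q := by simpa using hA.dotProduct_mulVec_nonneg x
  have hqpos : 0 < q := by
    rcases lt_or_eq_of_le hq0 with h | h
    · exact h
    · exact absurd ((hA.dotProduct_mulVec_zero_iff x).mp (by simpa using h.symm)) hx
  set s := Real.sqrt q with hsdef
  have hspos : 0 < s := Real.sqrt_pos.mpr hqpos
  have hsne : s ≠ 0 := ne_of_gt hspos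
  have hss : s * s = q := Real.mul_self_sqrt hq0
  -- stationarity gives A x = 2 s x
  have hAx : A.mulVec x = fun i => (2 * s) * x i := by
    funext i
    have h2 : 2 * x i - s⁻¹ * (A.mulVec x i) = 0 := by
      simpa [toEuc] using congrArg (fun y : EuclideanSpace ℝ (Fin n) => y i) hstat
    field_simp at h2
    linarith
  have hx0 : x ≠ 0 := by
    intro h
    apply hx
    funext i
    have : x i = 0 := by simp [h]
    simp [Matrix.mulVec, dotProduct]
    rw [show x.ofLp = fun _ : Fin n => (0:ℝ) from funext fun j => by simp [h]]
    simp
  have ht0 : 0 < x ⬝ᵥ x := by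
    rcases lt_or_eq_of_le (Finset.sum_nonneg fun i _ => mul_self_nonneg (x i)) with h | h
    · exact h
    · exact absurd (dotProduct_self_eq_zero.mp h.symm) ((WithLp.ofLp_eq_zero 2).not.2 hx0)
  have hq2 : q = 2 * s * (x ⬝ᵥ x) := by
    conv_lhs => rw [hqdef, hAx]
    simp only [dotProduct, Finset.mul_sum]
    exact Finset.sum_congr rfl fun i _ => by ring
  have hst : s = 2 * (x ⬝ᵥ x) := by
    have : s * s = s * (2 * (x ⬝ᵥ x)) := by rw [hss, hq2]; ring
    exact mul_left_cancel₀ hsne this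
  -- x is an eigenvector with eigenvalue 2s
  have hxe : toEuc (A.mulVec x) = (2 * s) • x := by
    ext i; simpa [toEuc] using congrFun hAx i
  have hle : 2 * s ≤ lam1 := hlam1_max _ x hx0 hxe
  -- the norm of x
  have hnorm : ‖x‖ ^ 2 = x ⬝ᵥ x := by
    rw [EuclideanSpace.norm_eq, Real.sq_sqrt (by positivity)]
    simp only [Real.norm_eq_abs, sq_abs, sq, dotProduct, abs_mul_abs_self]
  -- symmetry of A
  have hAT : Aᵀ = A := by
    have := hA.1
    rwa [Matrix.IsHermitian, Matrix.conjTranspose_eq_transpose_of_trivial] at this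
  have hsymm : ∀ u w : Fin n → ℝ, u ⬝ᵥ A.mulVec w = A.mulVec u ⬝ᵥ w := by
    intro u w
    rw [Matrix.dotProduct_mulVec, ← Matrix.mulVec_transpose, hAT]
  -- the key saddle construction
  have key : 2 * s < lam1 → ∃ (c : ℝ) (w : Fin n → ℝ),
      c < 0 ∧ w ≠ 0 ∧ H.mulVec w = c • w := by
    intro hlt
    obtain ⟨v, hv0, hveq⟩ := hlam1_eig
    have hvA : A.mulVec v = fun i => lam1 * v i := funext fun i => by
      simpa [toEuc] using congrArg (fun y : EuclideanSpace ℝ (Fin n) => y i) hveq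
    have hortho : x ⬝ᵥ v = 0 := by
      have h1 : x ⬝ᵥ A.mulVec v = lam1 * (x ⬝ᵥ v) := by
        rw [hvA]
        simp only [dotProduct, Finset.mul_sum]
        exact Finset.sum_congr rfl fun i _ => by ring
      have h2 : x ⬝ᵥ A.mulVec v = (2 * s) * (x ⬝ᵥ v) := by
        rw [hsymm x v, hAx]
        simp only [dotProduct, Finset.mul_sum]
        exact Finset.sum_congr rfl fun i _ => by ring
      have h3 : (lam1 - 2 * s) * (x ⬝ᵥ v) = 0 := by linarith [h1, h2]
      rcases mul_eq_zero.mp h3 with h | h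
      · exact absurd h (by linarith)
      · exact h
    have huv : A.mulVec x ⬝ᵥ v = 0 := by
      rw [hAx]
      have : (fun i => (2 * s) * x i) ⬝ᵥ v = (2 * s) * (x ⬝ᵥ v) := by
        simp only [dotProduct, Finset.mul_sum]
        exact Finset.sum_congr rfl fun i _ => by ring
      rw [this, hortho, mul_zero]
    have hvm : (vecMulVec (A.mulVec x) (A.mulVec x)).mulVec v = 0 := by
      obtain ⟨u, hu⟩ : ∃ u, A.mulVec x = u := ⟨_, rfl⟩
      rw [hu] at huv ⊢
      funext i
      simp only [Matrix.mulVec, Matrix.vecMulVec_apply, dotProduct, Pi.zero_apply]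
      have h4 : ∑ j, u i * u j * v j = u i * ∑ j, u j * v j := by
        rw [Finset.mul_sum]
        exact Finset.sum_congr rfl fun j _ => by ring
      rw [h4]
      simp only [dotProduct] at huv
      rw [huv, mul_zero]
    refine ⟨2 - s⁻¹ * lam1, v, ?_, (WithLp.ofLp_eq_zero 2).not.2 hv0, ?_⟩
    · have : (2 - s⁻¹ * lam1) * s = 2 * s - lam1 := by field_simp
      nlinarith [hspos]
    · funext i
      rw [hH]
      rw [Matrix.add_mulVec, Matrix.sub_mulVec, Matrix.smul_mulVec,
        Matrix.smul_mulVec, Matrix.smul_mulVec, Matrix.one_mulVec, hvA, hvm]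
      simp only [Pi.add_apply, Pi.sub_apply, Pi.smul_apply, smul_eq_mul, Pi.zero_apply]
      ring
  constructor
  · intro hPSD
    rcases eq_or_lt_of_le hle with heq | hlt
    · rw [hf x, hnorm, ← hsdef, ← heq]
      linarith [hst]
    · obtain ⟨c, w, hc, hw, hvec⟩ := key hlt
      exfalso
      have hge : (0:ℝ) ≤ w ⬝ᵥ H.mulVec w := by simpa using hPSD.dotProduct_mulVec_nonneg w
      have hww : 0 < w ⬝ᵥ w := by
        rcases lt_or_eq_of_le (Finset.sum_nonneg fun i _ => mul_self_nonneg (w i)) with h | h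
        · exact h
        · exact absurd (dotProduct_self_eq_zero.mp h.symm) hw
      have : w ⬝ᵥ H.mulVec w = c * (w ⬝ᵥ w) := by
        rw [hvec]
        simp only [dotProduct, Pi.smul_apply, smul_eq_mul, Finset.mul_sum]
        exact Finset.sum_congr rfl fun i _ => by ring
      nlinarith
  · intro μ hμ hμlt
    have hμ2 : μ = 2 * s := smul_left_injective ℝ hx0 (hμ.symm.trans hxe)
    exact key (hμ2 ▸ hμlt)
end

section
/- The quadratic model with curvature 2I is a global majorant of f: for every y ∈ ℝⁿ with A y ≠ 0 and every x ∈ ℝⁿ, f(x) ≤ f(y) + ⟨∇f(y), x − y⟩ + ‖x − y‖², where ∇f(y) = 2y − Ay/(yᵀAy)^{1/2}. -/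
open Matrix RealInnerProductSpace
open scoped MatrixOrder

lemma herm_dot {n} {M : Matrix (Fin n) (Fin n) ℝ} (h : M.IsHermitian) (v w : Fin n → ℝ) :
    v ⬝ᵥ M.mulVec w = (M.mulVec v) ⬝ᵥ w := by
  rw [Matrix.dotProduct_mulVec, ← Matrix.mulVec_transpose,
    ← Matrix.conjTranspose_eq_transpose_of_trivial, h.eq]

lemma toEuc_norm {n} (u : Fin n → ℝ) : ‖toEuc u‖ = Real.sqrt (u ⬝ᵥ u) := by
  rw [EuclideanSpace.norm_eq]; congr 1; simp [toEuc, dotProduct, sq]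

lemma toEuc_inner {n} (u : Fin n → ℝ) (v : EuclideanSpace ℝ (Fin n)) :
    ⟪toEuc u, v⟫ = u ⬝ᵥ (v : Fin n → ℝ) := by
  simp [toEuc, PiLp.inner_apply, dotProduct, RCLike.inner_apply, mul_comm]

lemma dot_self_nonneg {n} {u : Fin n → ℝ} : 0 ≤ u ⬝ᵥ u :=
  Finset.sum_nonneg fun i _ => mul_self_nonneg _

lemma sqrt_dot {n} (A : Matrix (Fin n) (Fin n) ℝ) (hA : A.PosSemidef) (v w : Fin n → ℝ) :
    v ⬝ᵥ A.mulVec w = ((CFC.sqrt A).mulVec v) ⬝ᵥ ((CFC.sqrt A).mulVec w) := by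
  conv_lhs => rw [← CFC.sqrt_mul_sqrt_self A hA.nonneg, ← Matrix.mulVec_mulVec,
    herm_dot (CFC.sqrt_nonneg A).posSemidef.isHermitian]


/-- The quadratic model with curvature `2I` is a global majorant of
`f(x) = ‖x‖² − (xᵀAx)^{1/2}`: for every `y` with `A y ≠ 0` and every `x`,
`f(x) ≤ f(y) + ⟨∇f(y), x − y⟩ + ‖x − y‖²`, where `∇f(y) = 2y − Ay/(yᵀAy)^{1/2}`. -/
theorem stmt_6 {n : ℕ} (hn : 0 < n) (A : Matrix (Fin n) (Fin n) ℝ)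
    (hA : A.PosSemidef)
    (f : EuclideanSpace ℝ (Fin n) → ℝ)
    (hf : ∀ x : EuclideanSpace ℝ (Fin n),
      f x = ‖x‖ ^ 2 - Real.sqrt (x ⬝ᵥ A.mulVec x))
    (y : EuclideanSpace ℝ (Fin n))
    (hy : A.mulVec y ≠ 0)
    (gradf : EuclideanSpace ℝ (Fin n))
    (hgrad : gradf = (2 : ℝ) • y - (Real.sqrt (y ⬝ᵥ A.mulVec y))⁻¹ • toEuc (A.mulVec y)) :
    ∀ x : EuclideanSpace ℝ (Fin n),
      f x ≤ f y + ⟪gradf, x - y⟫ + ‖x - y‖ ^ 2 := by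
  intro x
  set B := CFC.sqrt A with hB
  set s := Real.sqrt (y ⬝ᵥ A.mulVec y) with hsdef
  -- By ≠ 0
  have hBy : B.mulVec y ≠ 0 := by
    intro h
    apply hy
    rw [← CFC.sqrt_mul_sqrt_self A hA.nonneg, ← Matrix.mulVec_mulVec, ← hB, h, Matrix.mulVec_zero]
  have hqy : y ⬝ᵥ A.mulVec y = ‖toEuc (B.mulVec y)‖ ^ 2 := by
    rw [sqrt_dot A hA, toEuc_norm, Real.sq_sqrt dot_self_nonneg]
  have hs : 0 < s := by
    rw [hsdef, hqy, Real.sqrt_sq (norm_nonneg _)]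
    exact norm_pos_iff.mpr fun h => hBy (congrArg WithLp.ofLp h)
  have hs2 : s ^ 2 = y ⬝ᵥ A.mulVec y := by
    rw [hsdef, Real.sq_sqrt]; rw [hqy]; positivity
  -- Cauchy-Schwarz
  have hqx : Real.sqrt (x ⬝ᵥ A.mulVec x) = ‖toEuc (B.mulVec x)‖ := by
    rw [toEuc_norm, sqrt_dot A hA]
  have hCS : (A.mulVec y) ⬝ᵥ (x : Fin n → ℝ) ≤ Real.sqrt (x ⬝ᵥ A.mulVec x) * s := by
    have h1 : (A.mulVec y) ⬝ᵥ (x : Fin n → ℝ) = x ⬝ᵥ A.mulVec y := dotProduct_comm _ _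
    have h2 : x ⬝ᵥ A.mulVec y = ⟪toEuc (B.mulVec x), toEuc (B.mulVec y)⟫ := by
      rw [sqrt_dot A hA, toEuc_inner]; rfl
    have h3 := real_inner_le_norm (toEuc (B.mulVec x)) (toEuc (B.mulVec y))
    have h4 : s = ‖toEuc (B.mulVec y)‖ := by
      rw [hsdef, hqy, Real.sqrt_sq (norm_nonneg _)]
    rw [h1, h2, hqx, h4]
    exact h3
  -- dot with y
  have hAyy : (A.mulVec y) ⬝ᵥ (y : Fin n → ℝ) = s ^ 2 := by
    rw [hs2]; exact dotProduct_comm _ _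
  -- inner product expansion
  have hinner : ⟪gradf, x - y⟫ =
      2 * ⟪y, x - y⟫ - s⁻¹ * ((A.mulVec y) ⬝ᵥ (x : Fin n → ℝ) - (A.mulVec y) ⬝ᵥ (y : Fin n → ℝ)) := by
    rw [hgrad, inner_sub_left, real_inner_smul_left, real_inner_smul_left, toEuc_inner]
    have : ((x - y : EuclideanSpace ℝ (Fin n)) : Fin n → ℝ) = (x : Fin n → ℝ) - y := rfl
    rw [this, dotProduct_sub]
  have hns : ‖x - y‖ ^ 2 = ‖x‖ ^ 2 - 2 * ⟪y, x - y⟫ - ‖y‖ ^ 2 := by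
    have := norm_sub_sq_real x y
    have h2 : ⟪y, x - y⟫ = ⟪x, y⟫ - ‖y‖^2 := by
      rw [inner_sub_right, real_inner_self_eq_norm_sq, real_inner_comm]
    rw [h2]; linarith
  have hkey : s⁻¹ * ((A.mulVec y) ⬝ᵥ (x : Fin n → ℝ)) ≤ Real.sqrt (x ⬝ᵥ A.mulVec x) := by
    rw [inv_mul_le_iff₀ hs, mul_comm]
    exact hCS
  rw [hf x, hf y, hinner, hns, hAyy]
  have : s⁻¹ * s ^ 2 = s := by field_simp
  nlinarith [this]
end

section
/- For every x ∈ ℝⁿ with A x ≠ 0, the matrix 2I − ∇²f(x) = A/(xᵀAx)^{1/2} − (Ax)(Ax)ᵀ/(xᵀAx)^{3/2} is positive semidefinite; that is, every eigenvalue of the Hessian ∇²f(x) is at most 2 (f has positive Lipschitz constant L₊ = 2). -/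
open Matrix

/-- Cauchy–Schwarz for a real PSD matrix. -/
lemma psd_cauchy_schwarz {n : ℕ} {A : Matrix (Fin n) (Fin n) ℝ} (hA : A.PosSemidef)
    (w x : Fin n → ℝ) :
    (w ⬝ᵥ A.mulVec x) ^ 2 ≤ (w ⬝ᵥ A.mulVec w) * (x ⬝ᵥ A.mulVec x) := by
  have hAt : Aᵀ = A := by
    ext i j
    have := congrFun (congrFun hA.1 i) j
    simpa [conjTranspose_apply] using this
  have hsymm : ∀ u v : Fin n → ℝ, u ⬝ᵥ A.mulVec v = v ⬝ᵥ A.mulVec u := by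
    intro u v
    rw [dotProduct_mulVec, dotProduct_comm, ← mulVec_transpose, hAt]
  have key : discrim (w ⬝ᵥ A.mulVec w) (2 * (w ⬝ᵥ A.mulVec x)) (x ⬝ᵥ A.mulVec x) ≤ 0 := by
    apply discrim_le_zero
    intro t
    have h0 : 0 ≤ (t • w + x) ⬝ᵥ A.mulVec (t • w + x) := by
      have := hA.dotProduct_mulVec_nonneg (t • w + x)
      simpa using this
    have hexp : (t • w + x) ⬝ᵥ A.mulVec (t • w + x)
        = (w ⬝ᵥ A.mulVec w) * (t * t) + 2 * (w ⬝ᵥ A.mulVec x) * t + x ⬝ᵥ A.mulVec x := by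
      simp only [mulVec_add, mulVec_smul, add_dotProduct, dotProduct_add,
        smul_dotProduct, dotProduct_smul, smul_eq_mul]
      rw [hsymm x w]
      ring
    linarith [h0, hexp ▸ h0]
  rw [discrim] at key
  nlinarith [key]

/-- For every `x` with `A x ≠ 0`, the matrix
`2I − ∇²f(x) = A/(xᵀAx)^{1/2} − (Ax)(Ax)ᵀ/(xᵀAx)^{3/2}` is positive semidefinite;
equivalently, every eigenvalue of the Hessian
`∇²f(x) = 2I − A/(xᵀAx)^{1/2} + (Ax)(Ax)ᵀ/(xᵀAx)^{3/2}` is at most `2`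
(`f` has positive Lipschitz constant `L₊ = 2`). -/
theorem stmt_7 {n : ℕ} (hn : 0 < n) (A : Matrix (Fin n) (Fin n) ℝ)
    (hA : A.PosSemidef)
    (x : Fin n → ℝ)
    (hx : A.mulVec x ≠ 0)
    (H : Matrix (Fin n) (Fin n) ℝ)
    (hH : H = (2 : ℝ) • (1 : Matrix (Fin n) (Fin n) ℝ)
        - (Real.sqrt (x ⬝ᵥ A.mulVec x))⁻¹ • A
        + (Real.sqrt (x ⬝ᵥ A.mulVec x) ^ 3)⁻¹ • vecMulVec (A.mulVec x) (A.mulVec x)) :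
    ((2 : ℝ) • (1 : Matrix (Fin n) (Fin n) ℝ) - H).PosSemidef ∧
    (∀ (μ : ℝ) (w : Fin n → ℝ), w ≠ 0 → H.mulVec w = μ • w → μ ≤ 2) := by
  set p := x ⬝ᵥ A.mulVec x with hp
  have hpne : p ≠ 0 := by
    intro h
    apply hx
    have := (hA.dotProduct_mulVec_zero_iff x).mp (by simpa using h)
    simpa using this
  have hppos : 0 < p := lt_of_le_of_ne (by simpa using hA.dotProduct_mulVec_nonneg x) (Ne.symm hpne)
  set s := Real.sqrt p with hs
  have hspos : 0 < s := Real.sqrt_pos.mpr hppos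
  have hs2 : s * s = p := Real.mul_self_sqrt hppos.le
  have hM : (2 : ℝ) • (1 : Matrix (Fin n) (Fin n) ℝ) - H
      = s⁻¹ • A - (s ^ 3)⁻¹ • vecMulVec (A.mulVec x) (A.mulVec x) := by
    rw [hH]; abel
  have hpsd : ((2 : ℝ) • (1 : Matrix (Fin n) (Fin n) ℝ) - H).PosSemidef := by
    rw [hM]
    refine Matrix.PosSemidef.of_dotProduct_mulVec_nonneg ?_ ?_
    · have hAh := hA.1
      rw [Matrix.IsHermitian] at hAh ⊢
      ext i j
      simp [conjTranspose_apply, Matrix.sub_apply, Matrix.smul_apply, vecMulVec_apply, mul_comm,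
        ← congrFun (congrFun hAh j) i, conjTranspose_apply]
    · intro w
      simp only [star_trivial, sub_mulVec, smul_mulVec, dotProduct_sub,
        dotProduct_smul, smul_eq_mul]
      have hmvv : (vecMulVec (A.mulVec x) (A.mulVec x)).mulVec w
          = ((A.mulVec x) ⬝ᵥ w) • (A.mulVec x) := by
        generalize A.mulVec x = u
        ext i
        simp only [mulVec, dotProduct, vecMulVec_apply, Pi.smul_apply, smul_eq_mul,
          Finset.sum_mul, Finset.mul_sum]
        exact Finset.sum_congr rfl fun j _ => by ring
      rw [hmvv, dotProduct_smul, smul_eq_mul, dotProduct_comm (A.mulVec x) w]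
      have hcs := psd_cauchy_schwarz hA w x
      have hs3 : s ^ 3 = s * p := by rw [pow_succ, pow_two, hs2, mul_comm]
      rw [hs3, mul_inv]
      have hwAw : 0 ≤ w ⬝ᵥ A.mulVec w := by simpa using hA.dotProduct_mulVec_nonneg w
      rw [sub_nonneg]
      calc s⁻¹ * p⁻¹ * ((w ⬝ᵥ A.mulVec x) * (w ⬝ᵥ A.mulVec x))
          ≤ s⁻¹ * p⁻¹ * ((w ⬝ᵥ A.mulVec w) * p) := by
            apply mul_le_mul_of_nonneg_left
            · nlinarith [hcs]
            · exact (mul_pos (inv_pos.mpr hspos) (inv_pos.mpr hppos)).le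
        _ = s⁻¹ * (w ⬝ᵥ A.mulVec w) := by field_simp
  refine ⟨hpsd, fun μ w hw hmu => ?_⟩
  have h0 := hpsd.dotProduct_mulVec_nonneg w
  simp only [star_trivial, sub_mulVec, smul_mulVec, one_mulVec, hmu,
    dotProduct_sub, dotProduct_smul, smul_eq_mul] at h0
  have hww : 0 < w ⬝ᵥ w := by
    have h1 : 0 ≤ w ⬝ᵥ w := by
      exact Finset.sum_nonneg fun i _ => mul_self_nonneg (w i)
    rcases h1.lt_or_eq with h | h
    · exact h
    · exact absurd h.symm ((dotProduct_self_eq_zero (v := w)).not.mpr hw)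
  nlinarith [h0, hww]
end

section
/- Let A = FᵀF with F an r×n real matrix, and let u, v ∈ ℝʳ satisfy ‖u‖ ≤ 1, ‖v‖ ≤ 1 and uᵀv = 0. Define H_x(u,v) = 2I − Fᵀ(u uᵀ + v vᵀ)F/(xᵀAx)^{1/2} + (Ax)(Ax)ᵀ/(xᵀAx)^{3/2}. Then for every x ∈ ℝⁿ with A x ≠ 0, H_x(u,v) − ∇²f(x) is positive semidefinite, i.e. H_x(u,v) ⪰ ∇²f(x). -/
open Matrix

lemma aux_vecMulVec {r : ℕ} (w z : Fin r → ℝ) : (vecMulVec w w).mulVec z = (w ⬝ᵥ z) • w := by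
  ext i
  simp [mulVec, vecMulVec_apply, dotProduct, Finset.sum_mul, Finset.mul_sum]
  exact Finset.sum_congr rfl fun j _ => by ring

lemma aux_key {r : ℕ} (u v w : Fin r → ℝ) (hu : u ⬝ᵥ u ≤ 1) (hv : v ⬝ᵥ v ≤ 1)
    (huv : u ⬝ᵥ v = 0) : (u ⬝ᵥ w) ^ 2 + (v ⬝ᵥ w) ^ 2 ≤ w ⬝ᵥ w := by
  set a := u ⬝ᵥ w with ha
  set b := v ⬝ᵥ w with hb
  have hz : (0:ℝ) ≤ (w - a • u - b • v) ⬝ᵥ (w - a • u - b • v) :=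
    Finset.sum_nonneg fun i _ => mul_self_nonneg _
  have expand : (w - a • u - b • v) ⬝ᵥ (w - a • u - b • v)
      = w ⬝ᵥ w - 2*a^2 - 2*b^2 + a^2 * (u ⬝ᵥ u) + b^2 * (v ⬝ᵥ v) := by
    simp only [sub_dotProduct, dotProduct_sub, smul_dotProduct, dotProduct_smul, smul_eq_mul,
      dotProduct_comm w u, dotProduct_comm w v, dotProduct_comm v u, ← ha, ← hb, huv]
    ring
  rw [expand] at hz
  nlinarith [sq_nonneg a, sq_nonneg b]

lemma aux_norm_le {r : ℕ} (u : EuclideanSpace ℝ (Fin r)) (hu : ‖u‖ ≤ 1) :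
    (u : Fin r → ℝ) ⬝ᵥ u ≤ 1 := by
  have h1 : (u : Fin r → ℝ) ⬝ᵥ u = ∑ i, ‖u i‖ ^ 2 := by
    simp [dotProduct, Real.norm_eq_abs, sq_abs, sq]
  have h2 : (0:ℝ) ≤ ∑ i, ‖u i‖ ^ 2 := Finset.sum_nonneg fun i _ => sq_nonneg _
  rw [h1, ← Real.sq_sqrt h2, ← EuclideanSpace.norm_eq]
  nlinarith [norm_nonneg u]


/-- Let `A = FᵀF`, and let `u, v ∈ ℝʳ` satisfy `‖u‖ ≤ 1`, `‖v‖ ≤ 1`, `uᵀv = 0`. With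
`H_x(u,v) = 2I − Fᵀ(u uᵀ + v vᵀ)F/(xᵀAx)^{1/2} + (Ax)(Ax)ᵀ/(xᵀAx)^{3/2}` and
`∇²f(x) = 2I − A/(xᵀAx)^{1/2} + (Ax)(Ax)ᵀ/(xᵀAx)^{3/2}`, for every `x` with `A x ≠ 0`
we have `H_x(u,v) ⪰ ∇²f(x)` in the Loewner order. -/
theorem stmt_9 {r n : ℕ} (hn : 0 < n)
    (F : Matrix (Fin r) (Fin n) ℝ) (A : Matrix (Fin n) (Fin n) ℝ)
    (hAF : A = Fᵀ * F)
    (u v : EuclideanSpace ℝ (Fin r))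
    (hu : ‖u‖ ≤ 1) (hv : ‖v‖ ≤ 1) (huv : u ⬝ᵥ v = 0)
    (H hess : (Fin n → ℝ) → Matrix (Fin n) (Fin n) ℝ)
    (hHdef : ∀ x : Fin n → ℝ,
      H x = (2 : ℝ) • (1 : Matrix (Fin n) (Fin n) ℝ)
        - (Real.sqrt (x ⬝ᵥ A.mulVec x))⁻¹ • (Fᵀ * (vecMulVec u u + vecMulVec v v) * F)
        + (Real.sqrt (x ⬝ᵥ A.mulVec x) ^ 3)⁻¹ • vecMulVec (A.mulVec x) (A.mulVec x))
    (hhessdef : ∀ x : Fin n → ℝ,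
      hess x = (2 : ℝ) • (1 : Matrix (Fin n) (Fin n) ℝ)
        - (Real.sqrt (x ⬝ᵥ A.mulVec x))⁻¹ • A
        + (Real.sqrt (x ⬝ᵥ A.mulVec x) ^ 3)⁻¹ • vecMulVec (A.mulVec x) (A.mulVec x)) :
    ∀ x : Fin n → ℝ, A.mulVec x ≠ 0 → (H x - hess x).PosSemidef := by
  intro x hx
  set c : ℝ := (Real.sqrt (x ⬝ᵥ A.mulVec x))⁻¹ with hc
  have hc0 : 0 ≤ c := inv_nonneg.mpr (Real.sqrt_nonneg _)
  set P : Matrix (Fin r) (Fin r) ℝ := vecMulVec u u + vecMulVec v v with hP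
  set N : Matrix (Fin n) (Fin n) ℝ := A - Fᵀ * P * F with hN
  have hdiff : H x - hess x = c • N := by
    rw [hHdef x, hhessdef x, smul_sub]
    abel
  rw [hdiff, posSemidef_iff_dotProduct_mulVec]
  constructor
  · -- Hermitian
    have hPt : Pᵀ = P := by
      ext i j
      simp [hP, transpose_apply, vecMulVec_apply, mul_comm]
    have : Nᵀ = N := by
      rw [hN, transpose_sub, hAF]
      simp [transpose_mul, hPt, Matrix.mul_assoc]
    show (c • N)ᴴ = c • N
    have hNh : Nᴴ = N := by
      ext i j
      simp only [conjTranspose_apply, star_trivial]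
      simpa using congrFun (congrFun this i) j
    rw [conjTranspose_smul, star_trivial, hNh]
  · intro y
    have hsy : star y = y := by simp
    rw [hsy, smul_mulVec, dotProduct_smul, smul_eq_mul]
    refine mul_nonneg hc0 ?_
    have h1 : y ⬝ᵥ N.mulVec y
        = F.mulVec y ⬝ᵥ F.mulVec y - ((u ⬝ᵥ F.mulVec y) ^ 2 + (v ⬝ᵥ F.mulVec y) ^ 2) := by
      rw [hN, sub_mulVec, dotProduct_sub, hAF]
      have e1 : y ⬝ᵥ (Fᵀ * F).mulVec y = F.mulVec y ⬝ᵥ F.mulVec y := by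
        rw [← mulVec_mulVec, dotProduct_mulVec, vecMul_transpose]
      have e2 : y ⬝ᵥ (Fᵀ * P * F).mulVec y = F.mulVec y ⬝ᵥ P.mulVec (F.mulVec y) := by
        rw [Matrix.mul_assoc, ← mulVec_mulVec, ← mulVec_mulVec, dotProduct_mulVec,
          vecMul_transpose]
      rw [e1, e2, hP, add_mulVec, aux_vecMulVec, aux_vecMulVec, dotProduct_add,
        dotProduct_smul, dotProduct_smul, smul_eq_mul, smul_eq_mul,
        dotProduct_comm (F.mulVec y) u, dotProduct_comm (F.mulVec y) v]
      ring
    rw [h1, sub_nonneg]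
    exact aux_key u v (F.mulVec y) (aux_norm_le u hu) (aux_norm_le v hv) huv
end

section
/- Let 0 ≤ λₙ ≤ λ₂ < λ₁ be real numbers, let ζ ∈ ℝ, ω > 0, and δ ∈ [0,1). Then |ζ + ωλ| ≤ δ |ζ + ωλ₁| holds for every λ ∈ [λₙ, λ₂] if and only if both (λ₂ − δλ₁)/(1 − δ) ≤ −ζ/ω ≤ (λₙ + δλ₁)/(1 + δ) and δ ≥ (λ₂ − λₙ)/(2λ₁ − λ₂ − λₙ). In particular, the smallest admissible δ is δ* = (λ₂ − λₙ)/(2λ₁ − λ₂ − λₙ), attained when −ζ/ω = (λ₂ + λₙ)/2. -/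
lemma aux_stmt19 (lam1 lam2 lamn : ℝ)
    (h0 : 0 ≤ lamn) (hn2 : lamn ≤ lam2) (h21 : lam2 < lam1)
    (δ : ℝ) (hδ0 : 0 ≤ δ) (hδ1 : δ < 1) (c : ℝ) :
    (∀ lam : ℝ, lam ∈ Set.Icc lamn lam2 →
        |lam - c| ≤ δ * |lam1 - c|) ↔
      ((lam2 - δ * lam1) / (1 - δ) ≤ c ∧
        c ≤ (lamn + δ * lam1) / (1 + δ) ∧
        (lam2 - lamn) / (2 * lam1 - lam2 - lamn) ≤ δ) := by
  have h1δ : (0:ℝ) < 1 - δ := by linarith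
  have h1δ' : (0:ℝ) < 1 + δ := by linarith
  have hden : (0:ℝ) < 2 * lam1 - lam2 - lamn := by linarith
  constructor
  · intro h
    have h2 := h lam2 ⟨hn2, le_refl _⟩
    have hn := h lamn ⟨le_refl _, hn2⟩
    have hc1 : c < lam1 := by
      by_contra hc
      push_neg at hc
      rw [abs_of_nonpos (by linarith), abs_of_nonpos (by linarith)] at h2
      nlinarith
    rw [abs_of_pos (by linarith : (0:ℝ) < lam1 - c)] at h2 hn
    rw [abs_le] at h2 hn
    obtain ⟨-, h2⟩ := h2
    obtain ⟨hn, -⟩ := hn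
    refine ⟨?_, ?_, ?_⟩
    · rw [div_le_iff₀ h1δ]; nlinarith
    · rw [le_div_iff₀ h1δ']; nlinarith
    · rw [div_le_iff₀ hden]; nlinarith
  · rintro ⟨hA, hB, -⟩
    rw [div_le_iff₀ h1δ] at hA
    rw [le_div_iff₀ h1δ'] at hB
    have hc1 : c < lam1 := by nlinarith
    intro lam ⟨hl, hr⟩
    rw [abs_of_pos (by linarith : (0:ℝ) < lam1 - c), abs_le]
    constructor <;> nlinarith

/-- Let `0 ≤ λₙ ≤ λ₂ < λ₁`, `ζ ∈ ℝ`, `ω > 0`, `δ ∈ [0,1)`. Then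
`|ζ + ωλ| ≤ δ|ζ + ωλ₁|` for every `λ ∈ [λₙ, λ₂]` iff both
`(λ₂ − δλ₁)/(1 − δ) ≤ −ζ/ω ≤ (λₙ + δλ₁)/(1 + δ)` and
`δ ≥ (λ₂ − λₙ)/(2λ₁ − λ₂ − λₙ)`. In particular the smallest admissible `δ` is
`δ* = (λ₂ − λₙ)/(2λ₁ − λ₂ − λₙ)`, attained when `−ζ/ω = (λ₂ + λₙ)/2`. -/
theorem stmt_19 (lam1 lam2 lamn : ℝ)
    (h0 : 0 ≤ lamn) (hn2 : lamn ≤ lam2) (h21 : lam2 < lam1)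
    (ζ ω : ℝ) (hω : 0 < ω)
    (δ : ℝ) (hδ0 : 0 ≤ δ) (hδ1 : δ < 1) :
    ((∀ lam : ℝ, lam ∈ Set.Icc lamn lam2 →
        |ζ + ω * lam| ≤ δ * |ζ + ω * lam1|) ↔
      ((lam2 - δ * lam1) / (1 - δ) ≤ -ζ / ω ∧
        -ζ / ω ≤ (lamn + δ * lam1) / (1 + δ) ∧
        (lam2 - lamn) / (2 * lam1 - lam2 - lamn) ≤ δ)) ∧
    (-ζ / ω = (lam2 + lamn) / 2 →
      ∀ lam : ℝ, lam ∈ Set.Icc lamn lam2 →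
        |ζ + ω * lam| ≤ (lam2 - lamn) / (2 * lam1 - lam2 - lamn) * |ζ + ω * lam1|) := by
  have hω' : ω ≠ 0 := ne_of_gt hω
  set c : ℝ := -ζ / ω with hc
  have hζ : ζ = -(ω * c) := by rw [hc]; field_simp
  have key : ∀ lam : ℝ, |ζ + ω * lam| = ω * |lam - c| := by
    intro lam
    rw [hζ]
    rw [show -(ω * c) + ω * lam = ω * (lam - c) by ring, abs_mul, abs_of_pos hω]
  have hden : (0:ℝ) < 2 * lam1 - lam2 - lamn := by linarith
  constructor
  · rw [show (∀ lam : ℝ, lam ∈ Set.Icc lamn lam2 →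
        |ζ + ω * lam| ≤ δ * |ζ + ω * lam1|) ↔
        (∀ lam : ℝ, lam ∈ Set.Icc lamn lam2 →
        |lam - c| ≤ δ * |lam1 - c|) from ?_]
    · exact aux_stmt19 lam1 lam2 lamn h0 hn2 h21 δ hδ0 hδ1 c
    · constructor <;> intro h lam hm <;> have := h lam hm <;>
        rw [key, key] at * <;> nlinarith [abs_nonneg (lam - c), abs_nonneg (lam1 - c), this]
  · intro hmid lam ⟨hl, hr⟩
    rw [key, key]
    have hcm : c = (lam2 + lamn) / 2 := hmid
    have h1 : |lam1 - c| = lam1 - c := abs_of_pos (by rw [hcm]; linarith)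
    have h2 : |lam - c| ≤ (lam2 - lamn) / 2 := by
      rw [abs_le, hcm]; constructor <;> linarith
    rw [h1]
    have h3 : (lam2 - lamn) / (2 * lam1 - lam2 - lamn) * (lam1 - c) = (lam2 - lamn) / 2 := by
      rw [hcm]; field_simp; ring
    calc ω * |lam - c| ≤ ω * ((lam2 - lamn) / 2) := by nlinarith
      _ = (lam2 - lamn) / (2 * lam1 - lam2 - lamn) * (ω * (lam1 - c)) := by
          rw [← h3]; ring
end
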